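/- Let λ₁, μ₁, λ₂, μ₂ ∈ ℝ satisfy the Gutiérrez conditions 0 < −λ₂−μ₂ = μ₁ < μ₂ and λ₁+μ₁ > 0, and set K_j M := λ_j tr(M) I₂ + μ_j (M + Mᵀ) + 2μ₁ cof(M) for j = 1, 2. Then for every unit vector ν ∈ ℝ² and every ξ ∈ ℝ² there exists a unique 2×2 real matrix Φ such that (K₁Φ)ν = ξ and (K₂Φ)ν = ξ. -/

import Mathlib

open Matrix

/-- Cofactor matrix of `A = !![a,c; b,d]`, namely `!![d,−b; −c,a]`. -/
def cof (A : Matrix (Fin 2) (Fin 2) ℝ) : Matrix (Fin 2) (Fin 2) ℝ :=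
  !![A 1 1, -(A 1 0); -(A 0 1), A 0 0]

/-- The augmented elasticity map `K(λ,μ)M := λ tr(M) I₂ + μ (M + Mᵀ) + 2μ₁ cof(M)`. -/
noncomputable def Kmap (l m m1 : ℝ) (M : Matrix (Fin 2) (Fin 2) ℝ) :
    Matrix (Fin 2) (Fin 2) ℝ :=
  (l * M.trace) • (1 : Matrix (Fin 2) (Fin 2) ℝ) + m • (M + Mᵀ) + (2 * m1) • cof M

theorem stmt5 (l1 m1 l2 m2 : ℝ)
    (hpos : 0 < m1) (heq : -l2 - m2 = m1) (hlt : m1 < m2) (hvse : 0 < l1 + m1)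
    (ν : Fin 2 → ℝ) (hν : Real.sqrt (ν 0 ^ 2 + ν 1 ^ 2) = 1) (ξ : Fin 2 → ℝ) :
    ∃! Φ : Matrix (Fin 2) (Fin 2) ℝ,
      (Kmap l1 m1 m1 Φ) *ᵥ ν = ξ ∧ (Kmap l2 m2 m1 Φ) *ᵥ ν = ξ := by
  have h0 : (0:ℝ) ≤ ν 0 ^ 2 + ν 1 ^ 2 := by positivity
  have hn : ν 0 ^ 2 + ν 1 ^ 2 = 1 := by
    nlinarith [Real.sq_sqrt h0]
  have hal : l1 + 2*m1 ≠ 0 := by linarith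
  have hbe : m2 - m1 ≠ 0 := by linarith
  have hm1 : m1 ≠ 0 := ne_of_gt hpos
  set n0 := ν 0
  set n1 := ν 1
  set x0 := ξ 0
  set x1 := ξ 1
  set X := x0 * n0 + x1 * n1 with hXdef
  set W := x0 * n1 - x1 * n0 with hWdef
  -- the solution matrix
  set A := (X/(l1+2*m1) + X*(n0^2-n1^2)/(m2-m1))/2 with hA
  set D := (X/(l1+2*m1) - X*(n0^2-n1^2)/(m2-m1))/2 with hD
  set C := (2*X*n0*n1/(m2-m1) + W/m1)/2 with hC
  set B := (2*X*n0*n1/(m2-m1) - W/m1)/2 with hB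
  have hs0 : (l1+2*m1) * (A + D) = X := by rw [hA, hD]; field_simp; ring
  have hw0 : m1 * (C - B) = W := by rw [hC, hB]; field_simp; ring
  have hu0 : (m2-m1) * (A - D) = X*(n0^2-n1^2) := by rw [hA, hD]; field_simp; ring
  have hp0 : (m2-m1) * (B + C) = 2*X*n0*n1 := by rw [hB, hC]; field_simp; ring
  refine ⟨!![A, C; B, D], ⟨?_, ?_⟩, ?_⟩
  · funext i
    fin_cases i <;>
      simp [Kmap, cof, Matrix.mulVec, dotProduct, Fin.sum_univ_two,
        Matrix.trace_fin_two, Matrix.one_apply, Matrix.cons_val_zero,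
        Matrix.cons_val_one, Matrix.head_cons, Matrix.head_fin_const,
        Matrix.cons_val', Matrix.empty_val', Matrix.cons_val_fin_one, Matrix.vecHead,
        Matrix.vecTail, Function.comp]
    · linear_combination n0 * hs0 + n1 * hw0 + x0 * hn
    · linear_combination n1 * hs0 - n0 * hw0 + x1 * hn
  · funext i
    fin_cases i <;>
      simp [Kmap, cof, Matrix.mulVec, dotProduct, Fin.sum_univ_two,
        Matrix.trace_fin_two, Matrix.one_apply, Matrix.cons_val_zero,
        Matrix.cons_val_one, Matrix.head_cons, Matrix.head_fin_const,
        Matrix.cons_val', Matrix.empty_val', Matrix.cons_val_fin_one, Matrix.vecHead,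
        Matrix.vecTail, Function.comp]
    · linear_combination n0 * hu0 + n1 * hp0 + n1 * hw0 +
        (X * n0 + x0) * hn - (A + D) * n0 * heq
    · linear_combination n0 * hp0 - n0 * hw0 - n1 * hu0 +
        (X * n1 + x1) * hn - (A + D) * n1 * heq
  · rintro Φ ⟨h1, h2⟩
    have e10 := congrFun h1 0
    have e11 := congrFun h1 1
    have e20 := congrFun h2 0
    have e21 := congrFun h2 1
    simp [Kmap, cof, Matrix.mulVec, dotProduct, Fin.sum_univ_two,
      Matrix.trace_fin_two, Matrix.one_apply] at e10 e11 e20 e21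
    have hs : (l1+2*m1) * (Φ 0 0 + Φ 1 1) = X := by
      linear_combination n0 * e10 + n1 * e11 - ((l1+2*m1) * (Φ 0 0 + Φ 1 1)) * hn
    have hw : m1 * (Φ 0 1 - Φ 1 0) = W := by
      linear_combination n1 * e10 - n0 * e11 - (m1 * (Φ 0 1 - Φ 1 0)) * hn
    have hu : (m2-m1) * (Φ 0 0 - Φ 1 1) = X*(n0^2-n1^2) := by
      linear_combination n0 * e20 - n1 * e21 - 2*n0*n1 * hw -
        ((m2-m1)*(Φ 0 0 - Φ 1 1) + x0*n0 - x1*n1) * hn +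
        (Φ 0 0 + Φ 1 1) * (n0^2 - n1^2) * heq
    have hp : (m2-m1) * (Φ 1 0 + Φ 0 1) = 2*X*n0*n1 := by
      linear_combination n1 * e20 + n0 * e21 + (n0^2-n1^2) * hw -
        ((m2-m1)*(Φ 1 0 + Φ 0 1) + x0*n1 + x1*n0) * hn +
        2*n0*n1*(Φ 0 0 + Φ 1 1) * heq
    ext i j
    fin_cases i <;> fin_cases j <;>
      simp only [Matrix.cons_val', Matrix.cons_val_zero, Matrix.cons_val_one,
        Matrix.head_cons, Matrix.head_fin_const, Matrix.empty_val',
        Matrix.cons_val_fin_one, Fin.mk_zero, Fin.mk_one, Matrix.of_apply]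
    · rw [hA]; field_simp
      linear_combination (m2-m1) * hs + (l1+2*m1) * hu
    · rw [hC]; field_simp
      linear_combination m1 * hp + (m2-m1) * hw
    · rw [hB]; field_simp
      linear_combination m1 * hp - (m2-m1) * hw
    · rw [hD]; field_simp
      linear_combination (m2-m1) * hs - (l1+2*m1) * hu
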